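/- (Muckenhoupt weighted maximal inequality for power weights.) Suppose 1 < p < ∞ and −1 < a < p − 1. Then there exists a constant C such that ‖ 𝓜f ‖_{L^p(ℝ, |t|^a dt)} ≤ C ‖ f ‖_{L^p(ℝ, |t|^a dt)} for all f ∈ L^p(ℝ, |t|^a dt), where 𝓜 is the Hardy–Littlewood maximal operator on ℝ. -/

import Mathlib

open MeasureTheory Set
open scoped ENNReal NNReal

/-- The Hardy–Littlewood maximal operator on `ℝ`:
`(𝓜 f)(t) = sup_{σ>0} (1/(2σ)) ∫_{t-σ}^{t+σ} |f(η)| dη`. -/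
noncomputable def maxHL (f : ℝ → ℝ) (t : ℝ) : ℝ≥0∞ :=
  ⨆ (σ : ℝ) (_ : 0 < σ),
    (ENNReal.ofReal (2 * σ))⁻¹ * ∫⁻ η in Ioo (t - σ) (t + σ), (‖f η‖₊ : ℝ≥0∞)

namespace MuckAux

open Metric

/-- maximal operator for `ℝ≥0∞`-valued densities. -/
noncomputable def MB (g : ℝ → ℝ≥0∞) (t : ℝ) : ℝ≥0∞ :=
  ⨆ (σ : ℝ) (_ : 0 < σ),
    (ENNReal.ofReal (2 * σ))⁻¹ * ∫⁻ η in Ioo (t - σ) (t + σ), g η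

/-- the power weight measure `|t|^a dt`. -/
noncomputable def wm (a : ℝ) : Measure ℝ :=
  volume.withDensity fun t => ENNReal.ofReal (|t| ^ a)

lemma measurable_w (γ : ℝ) : Measurable fun t : ℝ => ENNReal.ofReal (|t| ^ γ) := by
  apply ENNReal.measurable_ofReal.comp
  exact (measurable_id.abs).pow measurable_const

instance (a : ℝ) : SFinite (wm a) := by unfold wm; infer_instance

lemma measurable_avg (g : ℝ → ℝ≥0∞) (hg : Measurable g) (σ : ℝ) :
    Measurable fun t => ∫⁻ η in Ioo (t - σ) (t + σ), g η := by
  have h1 : ∀ t, (∫⁻ η in Ioo (t - σ) (t + σ), g η)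
      = ∫⁻ η, (fun q : ℝ × ℝ => if q.1 - σ < q.2 ∧ q.2 < q.1 + σ then g q.2 else 0) (t, η) := by
    intro t
    rw [← lintegral_indicator measurableSet_Ioo]
    congr 1; ext η; simp [Set.indicator_apply, Set.mem_Ioo]
  simp_rw [h1]
  refine Measurable.lintegral_prod_right'
    (f := fun q : ℝ × ℝ => if q.1 - σ < q.2 ∧ q.2 < q.1 + σ then g q.2 else 0) ?_
  have hs : MeasurableSet {q : ℝ × ℝ | q.1 - σ < q.2 ∧ q.2 < q.1 + σ} := by
    apply MeasurableSet.inter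
    · exact measurableSet_lt (measurable_fst.sub measurable_const) measurable_snd
    · exact measurableSet_lt measurable_snd (measurable_fst.add measurable_const)
  exact Measurable.ite hs (hg.comp measurable_snd) measurable_const

lemma MB_eq_ratSup (g : ℝ → ℝ≥0∞) (t : ℝ) :
    MB g t = ⨆ (σ : ℚ) (_ : 0 < (σ : ℝ)),
      (ENNReal.ofReal (2 * (σ : ℝ)))⁻¹ * ∫⁻ η in Ioo (t - (σ : ℝ)) (t + (σ : ℝ)), g η := by
  apply le_antisymm
  · apply iSup_le; intro σ; apply iSup_le; intro hσ
    apply ENNReal.le_of_forall_lt_one_mul_le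
    intro c hc
    rcases eq_or_ne c 0 with rfl | hc0
    · simp
    have hct : c ≠ ⊤ := hc.ne_top
    set cr := c.toReal with hcr
    have hcr1 : cr < 1 := by
      rw [hcr]
      exact ENNReal.toReal_lt_of_lt_ofReal (by simpa using hc)
    have hcr0 : 0 < cr := ENNReal.toReal_pos hc0 hct
    obtain ⟨ρ, hρ1, hρ2⟩ := exists_rat_btwn (show σ < σ / cr by
      rw [lt_div_iff₀ hcr0]; nlinarith)
    have hρpos : 0 < (ρ : ℝ) := lt_trans hσ hρ1
    have key : c * ((ENNReal.ofReal (2 * σ))⁻¹ * ∫⁻ η in Ioo (t - σ) (t + σ), g η)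
        ≤ (ENNReal.ofReal (2 * (ρ : ℝ)))⁻¹ * ∫⁻ η in Ioo (t - (ρ : ℝ)) (t + (ρ : ℝ)), g η := by
      have hmono : (∫⁻ η in Ioo (t - σ) (t + σ), g η)
          ≤ ∫⁻ η in Ioo (t - (ρ : ℝ)) (t + (ρ : ℝ)), g η := by
        apply lintegral_mono_set
        exact Ioo_subset_Ioo (by linarith) (by linarith)
      have hcoef : c * (ENNReal.ofReal (2 * σ))⁻¹ ≤ (ENNReal.ofReal (2 * (ρ : ℝ)))⁻¹ := by
        have h2σ : (0:ℝ) < 2 * σ := by linarith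
        have h2ρ : (0:ℝ) < 2 * (ρ:ℝ) := by linarith
        rw [← ENNReal.ofReal_inv_of_pos h2σ, ← ENNReal.ofReal_inv_of_pos h2ρ,
          ← ENNReal.ofReal_toReal hct, ← hcr, ← ENNReal.ofReal_mul hcr0.le]
        apply ENNReal.ofReal_le_ofReal
        rw [lt_div_iff₀ hcr0] at hρ2
        rw [inv_eq_one_div (2*(ρ:ℝ)), ← div_eq_mul_inv, div_le_div_iff₀ h2σ h2ρ]
        nlinarith
      calc c * ((ENNReal.ofReal (2 * σ))⁻¹ * ∫⁻ η in Ioo (t - σ) (t + σ), g η)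
          = (c * (ENNReal.ofReal (2 * σ))⁻¹) * ∫⁻ η in Ioo (t - σ) (t + σ), g η := by ring
        _ ≤ (ENNReal.ofReal (2 * (ρ : ℝ)))⁻¹ * ∫⁻ η in Ioo (t - (ρ : ℝ)) (t + (ρ : ℝ)), g η := by
            exact mul_le_mul' hcoef hmono
    refine key.trans ?_
    refine le_trans (le_refl _) ?_
    exact le_iSup₂_of_le ρ (by exact_mod_cast hρpos) (le_refl _)
  · apply iSup_le; intro ρ; apply iSup_le; intro hρ
    exact le_iSup₂_of_le (ρ:ℝ) hρ (le_refl _)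

lemma measurable_MB (g : ℝ → ℝ≥0∞) (hg : Measurable g) : Measurable (MB g) := by
  have : MB g = fun t => ⨆ (σ : ℚ) (_ : 0 < (σ : ℝ)),
      (ENNReal.ofReal (2 * (σ : ℝ)))⁻¹ * ∫⁻ η in Ioo (t - (σ : ℝ)) (t + (σ : ℝ)), g η :=
    funext fun t => MB_eq_ratSup g t
  rw [this]
  apply Measurable.iSup; intro σ
  apply Measurable.iSup; intro hσ
  exact (measurable_avg g hg _).const_mul _

lemma MB_le_const (c : ℝ≥0∞) (g : ℝ → ℝ≥0∞) (hgc : ∀ t, g t ≤ c) (t : ℝ) : MB g t ≤ c := by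
  apply iSup_le; intro σ; apply iSup_le; intro hσ
  have h1 : (∫⁻ η in Ioo (t - σ) (t + σ), g η) ≤ c * ENNReal.ofReal (2 * σ) := by
    calc (∫⁻ η in Ioo (t - σ) (t + σ), g η) ≤ ∫⁻ _ in Ioo (t - σ) (t + σ), c := by
          exact setLIntegral_mono' measurableSet_Ioo fun η _ => hgc η
      _ = c * volume (Ioo (t - σ) (t + σ)) := setLIntegral_const _ _
      _ = c * ENNReal.ofReal (2 * σ) := by rw [Real.volume_Ioo]; ring_nf
  calc (ENNReal.ofReal (2 * σ))⁻¹ * (∫⁻ η in Ioo (t - σ) (t + σ), g η)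
      ≤ (ENNReal.ofReal (2 * σ))⁻¹ * (c * ENNReal.ofReal (2 * σ)) := by
        exact mul_le_mul' (le_refl _) h1
    _ = c * ((ENNReal.ofReal (2 * σ))⁻¹ * ENNReal.ofReal (2 * σ)) := by ring
    _ = c := by
        rw [ENNReal.inv_mul_cancel (by positivity) ENNReal.ofReal_ne_top, mul_one]

lemma MB_mono {g1 g2 : ℝ → ℝ≥0∞} (h : ∀ t, g1 t ≤ g2 t) (t : ℝ) : MB g1 t ≤ MB g2 t := by
  apply iSup_le; intro σ; apply iSup_le; intro hσ
  refine le_iSup₂_of_le σ hσ ?_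
  exact mul_le_mul' (le_refl _) (lintegral_mono fun η => h η)

lemma MB_add_le (g1 g2 : ℝ → ℝ≥0∞) (h1 : Measurable g1) (t : ℝ) :
    MB (fun η => g1 η + g2 η) t ≤ MB g1 t + MB g2 t := by
  apply iSup_le; intro σ; apply iSup_le; intro hσ
  have : (∫⁻ η in Ioo (t - σ) (t + σ), (g1 η + g2 η))
      = (∫⁻ η in Ioo (t - σ) (t + σ), g1 η) + ∫⁻ η in Ioo (t - σ) (t + σ), g2 η :=
    lintegral_add_left h1 _
  rw [this, mul_add]
  exact add_le_add (le_iSup₂_of_le σ hσ (le_refl _)) (le_iSup₂_of_le σ hσ (le_refl _))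

/-- one-sided basic integral: `∫_{(0,T)} c s^e ds = c T^(e+1)/(e+1)`. -/
lemma lint_rpow_Ioo (c e T : ℝ) (hc : 0 ≤ c) (he : -1 < e) (hT : 0 ≤ T) :
    ∫⁻ s in Ioo (0:ℝ) T, ENNReal.ofReal (c * s ^ e) = ENNReal.ofReal (c * T ^ (e+1) / (e+1)) := by
  have he1 : (0:ℝ) < e + 1 := by linarith
  have hset : (∫⁻ s in Ioo (0:ℝ) T, ENNReal.ofReal (c * s ^ e))
      = ∫⁻ s in Ioc (0:ℝ) T, ENNReal.ofReal (c * s ^ e) := setLIntegral_congr Ioo_ae_eq_Ioc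
  have hInt : IntegrableOn (fun s : ℝ => c * s ^ e) (Ioc 0 T) volume := by
    have h0 := intervalIntegral.intervalIntegrable_rpow' (a := 0) (b := T) he
    rw [intervalIntegrable_iff_integrableOn_Ioc_of_le hT] at h0
    exact h0.const_mul c
  have hnn : 0 ≤ᵐ[volume.restrict (Ioc (0:ℝ) T)] fun s : ℝ => c * s ^ e := by
    filter_upwards [ae_restrict_mem measurableSet_Ioc] with s hs
    exact mul_nonneg hc (Real.rpow_nonneg hs.1.le e)
  rw [hset, ← ofReal_integral_eq_lintegral_ofReal hInt hnn]
  congr 1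
  rw [← intervalIntegral.integral_of_le hT, intervalIntegral.integral_const_mul,
    integral_rpow (Or.inl he), Real.zero_rpow (by linarith : e + 1 ≠ 0)]
  ring

/-- upper bound for the integral of a power weight over an interval. -/
lemma lint_weight_le (γ : ℝ) (hγ : -1 < γ) :
    ∃ C : ℝ, 0 < C ∧ ∀ x σ : ℝ, 0 < σ →
      (∫⁻ t in closedBall x (5*σ), ENNReal.ofReal (|t| ^ γ))
        ≤ ENNReal.ofReal (C * (σ * max |x| σ ^ γ)) := by
  have hγ1 : (0:ℝ) < γ + 1 := by linarith
  set D : ℝ := max 1 ((10:ℝ) ^ (-γ)) with hD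
  have hD0 : (0:ℝ) < D := lt_of_lt_of_le one_pos (le_max_left _ _)
  set C1 : ℝ := 2 * 15 ^ (γ + 1) / (γ + 1) * D with hC1
  have h15 : (0:ℝ) < (15:ℝ) ^ (γ + 1) := Real.rpow_pos_of_pos (by norm_num) _
  have hC1pos : 0 < C1 := by positivity
  set D2 : ℝ := max (((2:ℝ)⁻¹) ^ γ) (((3/2 : ℝ)) ^ γ) with hD2
  have hD2pos : 0 < D2 := lt_of_lt_of_le (Real.rpow_pos_of_pos (by norm_num) γ) (le_max_left _ _)
  refine ⟨C1 + 10 * D2, by positivity, ?_⟩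
  intro x σ hσ
  have hm : 0 < max |x| σ := lt_of_lt_of_le hσ (le_max_right _ _)
  have hmγ : 0 ≤ max |x| σ ^ γ := Real.rpow_nonneg hm.le γ
  have hfin : C1 * (σ * max |x| σ ^ γ) ≤ (C1 + 10 * D2) * (σ * max |x| σ ^ γ) := by
    apply mul_le_mul_of_nonneg_right (by linarith) (by positivity)
  rcases le_or_gt |x| (10*σ) with hcase | hcase
  · -- |x| ≤ 10 σ : compare with the interval (-(15σ), 15σ)
    have hxabs := abs_le.mp (le_of_eq (rfl : |x| = |x|))
    have hx1 : -(10*σ) ≤ x := by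
      have := neg_abs_le x; linarith
    have hx2 : x ≤ 10*σ := le_trans (le_abs_self x) hcase
    have hsub : closedBall x (5*σ) ⊆ Icc (-(15*σ)) (15*σ) := by
      rw [Real.closedBall_eq_Icc]
      apply Icc_subset_Icc <;> linarith
    have hsplit : Icc (-(15*σ)) (15*σ) ⊆ Ico (-(15*σ)) 0 ∪ Icc 0 (15*σ) := by
      intro t ht
      rcases lt_or_ge t 0 with h | h
      · exact Or.inl ⟨ht.1, h⟩
      · exact Or.inr ⟨h, ht.2⟩
    have hIoc : ∀ T : ℝ, 0 ≤ T → (∫⁻ t in Ioc (0:ℝ) T, ENNReal.ofReal (|t| ^ γ))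
        = ENNReal.ofReal (T ^ (γ+1) / (γ+1)) := by
      intro T hT
      rw [← setLIntegral_congr (Ioo_ae_eq_Ioc (a := (0:ℝ)) (b := T))]
      rw [setLIntegral_congr_fun_ae measurableSet_Ioo
        (ae_of_all _ (fun t (ht : t ∈ Ioo (0:ℝ) T) => by
          rw [abs_of_pos ht.1]))]
      simpa using lint_rpow_Ioo 1 γ T (by norm_num) hγ hT
    have hneg : (∫⁻ t in Ico (-(15*σ)) 0, ENNReal.ofReal (|t| ^ γ))
        = ∫⁻ t in Ioc (0:ℝ) (15*σ), ENNReal.ofReal (|t| ^ γ) := by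
      have hpre : (Neg.neg : ℝ → ℝ) ⁻¹' (Ico (-(15*σ)) 0) = Ioc (0:ℝ) (15*σ) := by
        ext t
        simp only [mem_preimage, mem_Ico, mem_Ioc]
        constructor <;> rintro ⟨h1, h2⟩ <;> constructor <;> linarith
      have := (Measure.measurePreserving_neg (volume : Measure ℝ)).setLIntegral_comp_preimage_emb
        (MeasurableEquiv.neg ℝ).measurableEmbedding
        (fun t => ENNReal.ofReal (|t| ^ γ)) (Ico (-(15*σ)) 0)
      rw [hpre] at this
      rw [← this]
      apply setLIntegral_congr_fun_ae measurableSet_Ioc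
      exact ae_of_all _ fun t _ => by simp [abs_neg]
    have hIcc0 : (∫⁻ t in Icc (0:ℝ) (15*σ), ENNReal.ofReal (|t| ^ γ))
        = ∫⁻ t in Ioc (0:ℝ) (15*σ), ENNReal.ofReal (|t| ^ γ) := by
      refine (setLIntegral_congr ?_).symm
      exact Ioc_ae_eq_Icc
    have hval := hIoc (15*σ) (by linarith)
    have key : σ ^ γ ≤ D * max |x| σ ^ γ := by
      rcases le_or_gt 0 γ with hγ0 | hγ0
      · calc σ ^ γ ≤ max |x| σ ^ γ := Real.rpow_le_rpow hσ.le (le_max_right _ _) hγ0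
          _ ≤ D * max |x| σ ^ γ := by nlinarith [le_max_left (1:ℝ) ((10:ℝ) ^ (-γ))]
      · have hm10 : max |x| σ ≤ 10 * σ := max_le hcase (by linarith)
        have h1 : σ ^ γ ≤ (max |x| σ / 10) ^ γ := by
          apply Real.rpow_le_rpow_of_nonpos (by positivity) (by linarith) hγ0.le
        have h2 : (max |x| σ / 10) ^ γ = (10:ℝ) ^ (-γ) * max |x| σ ^ γ := by
          rw [div_eq_inv_mul, Real.mul_rpow (by norm_num) hm.le,
            Real.inv_rpow (by norm_num), ← Real.rpow_neg (by norm_num)]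
        have h3 : (10:ℝ) ^ (-γ) ≤ D := le_max_right _ _
        calc σ ^ γ ≤ (10:ℝ) ^ (-γ) * max |x| σ ^ γ := by rw [← h2]; exact h1
          _ ≤ D * max |x| σ ^ γ := by nlinarith
    calc (∫⁻ t in closedBall x (5*σ), ENNReal.ofReal (|t| ^ γ))
        ≤ ∫⁻ t in Icc (-(15*σ)) (15*σ), ENNReal.ofReal (|t| ^ γ) := lintegral_mono_set hsub
      _ ≤ ∫⁻ t in Ico (-(15*σ)) 0 ∪ Icc 0 (15*σ), ENNReal.ofReal (|t| ^ γ) :=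
          lintegral_mono_set hsplit
      _ ≤ (∫⁻ t in Ico (-(15*σ)) 0, ENNReal.ofReal (|t| ^ γ))
            + ∫⁻ t in Icc 0 (15*σ), ENNReal.ofReal (|t| ^ γ) := lintegral_union_le _ _ _
      _ = ENNReal.ofReal ((15*σ) ^ (γ+1) / (γ+1)) + ENNReal.ofReal ((15*σ) ^ (γ+1) / (γ+1)) := by
          rw [hneg, hIcc0, hval]
      _ = ENNReal.ofReal (2 * ((15*σ) ^ (γ+1) / (γ+1))) := by
          rw [← ENNReal.ofReal_add (by positivity) (by positivity)]
          ring_nf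
      _ ≤ ENNReal.ofReal ((C1 + 10 * D2) * (σ * max |x| σ ^ γ)) := by
          apply ENNReal.ofReal_le_ofReal
          have hexp : (15*σ) ^ (γ+1) = 15 ^ (γ+1) * (σ ^ γ * σ) := by
            rw [Real.mul_rpow (by norm_num) hσ.le, Real.rpow_add hσ, Real.rpow_one]
          rw [hexp]
          have step1 : 2 * ((15:ℝ) ^ (γ+1) * (σ ^ γ * σ) / (γ+1))
              ≤ 2 * ((15:ℝ) ^ (γ+1) * ((D * max |x| σ ^ γ) * σ) / (γ+1)) := by
            gcongr
          refine le_trans step1 (le_trans (le_of_eq ?_) hfin)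
          rw [hC1]; ring
  · -- 10 σ < |x| : pointwise bound on the ball
    have hx0 : 0 < |x| := by linarith
    have hmx : max |x| σ = |x| := max_eq_left (by linarith)
    have hpt : ∀ t ∈ closedBall x (5*σ), |t| ^ γ ≤ D2 * |x| ^ γ := by
      intro t ht
      rw [mem_closedBall, Real.dist_eq] at ht
      have h1 : |x| / 2 ≤ |t| := by
        have := abs_sub_abs_le_abs_sub x t
        rw [abs_sub_comm] at this
        linarith
      have h2 : |t| ≤ 3/2 * |x| := by
        have := abs_sub_abs_le_abs_sub t x
        linarith
      rcases le_or_gt 0 γ with hγ0 | hγ0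
      · calc |t| ^ γ ≤ (3/2 * |x|) ^ γ := Real.rpow_le_rpow (abs_nonneg t) h2 hγ0
          _ = (3/2:ℝ) ^ γ * |x| ^ γ := Real.mul_rpow (by norm_num) (abs_nonneg x)
          _ ≤ D2 * |x| ^ γ := by
              apply mul_le_mul_of_nonneg_right (le_max_right _ _) (Real.rpow_nonneg (abs_nonneg x) γ)
      · calc |t| ^ γ ≤ (|x| / 2) ^ γ := by
              apply Real.rpow_le_rpow_of_nonpos (by linarith) h1 hγ0.le
          _ = ((2:ℝ)⁻¹) ^ γ * |x| ^ γ := by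
              rw [div_eq_inv_mul, Real.mul_rpow (by norm_num) (abs_nonneg x)]
          _ ≤ D2 * |x| ^ γ := by
              apply mul_le_mul_of_nonneg_right (le_max_left _ _) (Real.rpow_nonneg (abs_nonneg x) γ)
    calc (∫⁻ t in closedBall x (5*σ), ENNReal.ofReal (|t| ^ γ))
        ≤ ∫⁻ _ in closedBall x (5*σ), ENNReal.ofReal (D2 * |x| ^ γ) := by
          apply setLIntegral_mono' measurableSet_closedBall
          intro t ht
          exact ENNReal.ofReal_le_ofReal (hpt t ht)
      _ = ENNReal.ofReal (D2 * |x| ^ γ) * volume (closedBall x (5*σ)) := setLIntegral_const _ _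
      _ = ENNReal.ofReal (D2 * |x| ^ γ) * ENNReal.ofReal (2 * (5*σ)) := by
          rw [Real.volume_closedBall]
      _ = ENNReal.ofReal (D2 * |x| ^ γ * (2 * (5*σ))) := by
          rw [← ENNReal.ofReal_mul (by positivity)]
      _ ≤ ENNReal.ofReal ((C1 + 10 * D2) * (σ * max |x| σ ^ γ)) := by
          apply ENNReal.ofReal_le_ofReal
          rw [hmx]
          nlinarith [mul_nonneg (mul_nonneg hC1pos.le hσ.le) (Real.rpow_nonneg (abs_nonneg x) γ)]

/-- the `A_q` + Hölder estimate on a ball. -/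
lemma ball_lemma (a q : ℝ) (ha1 : -1 < a) (hq : 1 < q) (haq : a < q - 1) :
    ∃ C : ℝ, 0 < C ∧ ∀ g : ℝ → ℝ≥0∞, Measurable g → ∀ x σ s : ℝ, 0 < σ → 0 < s →
      ENNReal.ofReal (2*σ*s) ≤ (∫⁻ η in Ioo (x - σ) (x + σ), g η) →
      wm a (closedBall x (5*σ)) * ENNReal.ofReal (s ^ q)
        ≤ ENNReal.ofReal C * ∫⁻ η in closedBall x σ, g η ^ q ∂(wm a) := by
  have hq1 : (0:ℝ) < q - 1 := by linarith
  have hq0 : (0:ℝ) ≤ q := by linarith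
  set β : ℝ := -(a / (q-1)) with hβ
  have hβ1 : -1 < β := by
    have := neg_lt_neg ((div_lt_one hq1).mpr haq)
    simpa [hβ] using this
  obtain ⟨Ca, hCa, hCab⟩ := lint_weight_le a ha1
  obtain ⟨Cb, hCb, hCbb⟩ := lint_weight_le β hβ1
  set K : ℝ := Ca * Cb ^ (q-1) / 2 ^ q with hK
  have h2q : (0:ℝ) < 2 ^ q := Real.rpow_pos_of_pos (by norm_num) q
  have hCbq : (0:ℝ) < Cb ^ (q-1) := Real.rpow_pos_of_pos hCb _
  have hKpos : 0 < K := by positivity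
  refine ⟨K, hKpos, ?_⟩
  intro g hg x σ s hσ hs hhyp
  set m := max |x| σ with hm'
  have hm : 0 < m := lt_of_lt_of_le hσ (le_max_right _ _)
  set q' : ℝ := q / (q-1) with hq'
  have hconj : q.HolderConjugate q' := (Real.holderConjugate_iff_eq_conjExponent hq).mpr rfl
  set ν := volume.restrict (closedBall x σ) with hν
  have hae : ∀ᵐ η ∂ν, η ≠ 0 := by
    rw [hν]
    refine ae_restrict_of_ae ?_
    have h0 : {η : ℝ | ¬ η ≠ 0} = {0} := by ext; simp
    rw [ae_iff, h0]
    exact measure_singleton 0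
  set f1 : ℝ → ℝ≥0∞ := fun η => g η * ENNReal.ofReal (|η| ^ (a/q)) with hf1'
  set f2 : ℝ → ℝ≥0∞ := fun η => ENNReal.ofReal (|η| ^ (-(a/q))) with hf2'
  have hstep : (∫⁻ η, g η ∂ν)
      ≤ (∫⁻ η, f1 η ^ q ∂ν) ^ (1/q) * (∫⁻ η, f2 η ^ q' ∂ν) ^ (1/q') := by
    have hH := ENNReal.lintegral_mul_le_Lp_mul_Lq ν hconj
      (hg.mul (measurable_w (a/q))).aemeasurable (measurable_w (-(a/q))).aemeasurable
    refine le_trans (le_of_eq ?_) hH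
    apply lintegral_congr_ae
    filter_upwards [hae] with η hη
    have habs : 0 < |η| := abs_pos.mpr hη
    simp only [f1, f2, Pi.mul_apply]
    rw [mul_assoc, ← ENNReal.ofReal_mul (Real.rpow_nonneg (abs_nonneg η) _),
      ← Real.rpow_add habs]
    simp
  have hrhs : (∫⁻ η in closedBall x σ, g η ^ q ∂(wm a))
      = ∫⁻ η, ENNReal.ofReal (|η| ^ a) * g η ^ q ∂ν := by
    rw [wm, restrict_withDensity measurableSet_closedBall,
      lintegral_withDensity_eq_lintegral_mul _ (measurable_w a) (hg.pow measurable_const)]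
    rfl
  have hfact1 : (∫⁻ η, f1 η ^ q ∂ν) = ∫⁻ η in closedBall x σ, g η ^ q ∂(wm a) := by
    rw [hrhs]
    apply lintegral_congr_ae
    filter_upwards [hae] with η hη
    have habs : 0 < |η| := abs_pos.mpr hη
    simp only [f1]
    rw [ENNReal.mul_rpow_of_nonneg _ _ hq0,
      ENNReal.ofReal_rpow_of_pos (Real.rpow_pos_of_pos habs _),
      ← Real.rpow_mul (abs_nonneg η), div_mul_cancel₀ a (by linarith : q ≠ 0)]
    ring
  have hfact2 : (∫⁻ η, f2 η ^ q' ∂ν) ≤ ENNReal.ofReal (Cb * (σ * m ^ β)) := by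
    have heq : (∫⁻ η, f2 η ^ q' ∂ν) = ∫⁻ η, ENNReal.ofReal (|η| ^ β) ∂ν := by
      apply lintegral_congr_ae
      filter_upwards [hae] with η hη
      have habs : 0 < |η| := abs_pos.mpr hη
      simp only [f2]
      rw [ENNReal.ofReal_rpow_of_pos (Real.rpow_pos_of_pos habs _),
        ← Real.rpow_mul (abs_nonneg η)]
      congr 2
      rw [hβ, hq']
      field_simp
    rw [heq, hν]
    calc (∫⁻ η in closedBall x σ, ENNReal.ofReal (|η| ^ β))
        ≤ ∫⁻ η in closedBall x (5*σ), ENNReal.ofReal (|η| ^ β) :=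
          lintegral_mono_set (closedBall_subset_closedBall (by linarith))
      _ ≤ ENNReal.ofReal (Cb * (σ * m ^ β)) := hCbb x σ hσ
  have hW5 : wm a (closedBall x (5*σ)) ≤ ENNReal.ofReal (Ca * (σ * m ^ a)) := by
    rw [wm, withDensity_apply _ measurableSet_closedBall]
    exact hCab x σ hσ
  have hIoo_sub : Ioo (x-σ) (x+σ) ⊆ closedBall x σ := by
    rw [Real.closedBall_eq_Icc]; exact Ioo_subset_Icc_self
  have hhyp' : ENNReal.ofReal (2*σ*s) ≤ ∫⁻ η, g η ∂ν := by
    refine le_trans hhyp ?_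
    rw [hν]
    exact lintegral_mono_set hIoo_sub
  set A := ∫⁻ η in closedBall x σ, g η ^ q ∂(wm a) with hA
  have hpow : ENNReal.ofReal ((2*σ*s) ^ q) ≤ A * (∫⁻ η, f2 η ^ q' ∂ν) ^ (q-1) := by
    have h := ENNReal.rpow_le_rpow (hhyp'.trans hstep) hq0
    rw [ENNReal.mul_rpow_of_nonneg _ _ hq0, ← ENNReal.rpow_mul, ← ENNReal.rpow_mul] at h
    have e1 : (1/q)*q = 1 := by field_simp
    have e2 : (1/q')*q = q-1 := by rw [hq']; field_simp
    rw [e1, e2, ENNReal.rpow_one, hfact1] at h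
    rw [← ENNReal.ofReal_rpow_of_pos (by positivity)]
    exact h
  have hmain : wm a (closedBall x (5*σ)) * ENNReal.ofReal ((2*σ*s) ^ q)
      ≤ A * ENNReal.ofReal (Ca * Cb ^ (q-1) * σ ^ q) := by
    have hf2pow : (∫⁻ η, f2 η ^ q' ∂ν) ^ (q-1)
        ≤ ENNReal.ofReal ((Cb * (σ * m ^ β)) ^ (q-1)) := by
      rw [← ENNReal.ofReal_rpow_of_pos (by positivity)]
      exact ENNReal.rpow_le_rpow hfact2 hq1.le
    have hreal : Ca * (σ * m ^ a) * (Cb * (σ * m ^ β)) ^ (q-1)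
        = Ca * Cb ^ (q-1) * σ ^ q := by
      rw [Real.mul_rpow hCb.le (by positivity), Real.mul_rpow hσ.le (by positivity),
        ← Real.rpow_mul hm.le]
      have h1 : β * (q-1) = -a := by rw [hβ]; field_simp
      have h2 : m ^ (β*(q-1)) = (m ^ a)⁻¹ := by rw [h1, Real.rpow_neg hm.le]
      have h3 : σ ^ q = σ * σ ^ (q-1) := by
        have h := Real.rpow_add hσ 1 (q-1)
        rw [Real.rpow_one] at h
        rw [show (1:ℝ) + (q-1) = q by ring] at h
        exact h
      rw [h2, h3]
      have hma : (0:ℝ) < m ^ a := Real.rpow_pos_of_pos hm a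
      field_simp
    calc wm a (closedBall x (5*σ)) * ENNReal.ofReal ((2*σ*s) ^ q)
        ≤ ENNReal.ofReal (Ca * (σ * m ^ a)) * (A * (∫⁻ η, f2 η ^ q' ∂ν) ^ (q-1)) :=
          mul_le_mul' hW5 hpow
      _ ≤ ENNReal.ofReal (Ca * (σ * m ^ a)) * (A * ENNReal.ofReal ((Cb * (σ * m ^ β)) ^ (q-1))) :=
          mul_le_mul' (le_refl _) (mul_le_mul' (le_refl _) hf2pow)
      _ = A * (ENNReal.ofReal (Ca * (σ * m ^ a)) * ENNReal.ofReal ((Cb * (σ * m ^ β)) ^ (q-1))) := by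
          ring
      _ = A * ENNReal.ofReal (Ca * Cb ^ (q-1) * σ ^ q) := by
          rw [← ENNReal.ofReal_mul (by positivity), hreal]
  -- cancel the factor `(2 σ)^q`
  have hsplit1 : ENNReal.ofReal ((2*σ*s) ^ q)
      = ENNReal.ofReal (s ^ q) * ENNReal.ofReal (2 ^ q * σ ^ q) := by
    rw [← ENNReal.ofReal_mul (by positivity)]
    congr 1
    rw [show (2*σ*s) = s * (2*σ) by ring, Real.mul_rpow hs.le (by positivity),
      Real.mul_rpow (by norm_num) hσ.le]
  have hsplit2 : ENNReal.ofReal (Ca * Cb ^ (q-1) * σ ^ q)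
      = ENNReal.ofReal K * ENNReal.ofReal (2 ^ q * σ ^ q) := by
    rw [← ENNReal.ofReal_mul hKpos.le]
    congr 1
    rw [hK]
    field_simp
  rw [hsplit1, hsplit2] at hmain
  have hc0 : ENNReal.ofReal (2 ^ q * σ ^ q) ≠ 0 := by
    simp only [ne_eq, ENNReal.ofReal_eq_zero, not_le]
    positivity
  have hcT : ENNReal.ofReal (2 ^ q * σ ^ q) ≠ ⊤ := ENNReal.ofReal_ne_top
  rw [show ENNReal.ofReal K * ENNReal.ofReal (2 ^ q * σ ^ q) = ENNReal.ofReal (2 ^ q * σ ^ q) * ENNReal.ofReal K by ring,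
    ← mul_assoc, mul_comm A] at hmain
  have := (ENNReal.mul_le_mul_iff_left hc0 hcT).mp (by
    calc wm a (closedBall x (5*σ)) * ENNReal.ofReal (s ^ q) * ENNReal.ofReal (2 ^ q * σ ^ q)
        = wm a (closedBall x (5*σ)) * (ENNReal.ofReal (s ^ q) * ENNReal.ofReal (2 ^ q * σ ^ q)) := by ring
      _ ≤ ENNReal.ofReal K * A * ENNReal.ofReal (2 ^ q * σ ^ q) := by
          rw [mul_assoc] at hmain ⊢
          calc wm a (closedBall x (5*σ)) * (ENNReal.ofReal (s ^ q) * ENNReal.ofReal (2 ^ q * σ ^ q))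
              ≤ ENNReal.ofReal (2 ^ q * σ ^ q) * ENNReal.ofReal K * A := hmain
            _ = ENNReal.ofReal K * (A * ENNReal.ofReal (2 ^ q * σ ^ q)) := by ring)
  exact this

/-- weighted weak type `(q,q)` for the maximal operator. -/
lemma weak_type (a q : ℝ) (ha1 : -1 < a) (hq : 1 < q) (haq : a < q - 1) :
    ∃ C : ℝ, 0 < C ∧ ∀ g : ℝ → ℝ≥0∞, Measurable g → ∀ s : ℝ, 0 < s →
      wm a {t | ENNReal.ofReal s < MB g t} * ENNReal.ofReal (s ^ q)
        ≤ ENNReal.ofReal C * ∫⁻ t, g t ^ q ∂(wm a) := by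
  obtain ⟨C, hC, hball⟩ := ball_lemma a q ha1 hq haq
  refine ⟨C, hC, ?_⟩
  intro g hg s hs
  set E : ℕ → Set ℝ := fun N => {t | ∃ σ : ℝ, 0 < σ ∧ σ ≤ (N:ℝ) ∧
    ENNReal.ofReal (2*σ*s) ≤ ∫⁻ η in Ioo (t - σ) (t + σ), g η} with hE
  have hmono : Monotone E := by
    intro N M hNM t ht
    obtain ⟨σ, h1, h2, h3⟩ := ht
    exact ⟨σ, h1, h2.trans (by exact_mod_cast hNM), h3⟩
  have hsub : {t | ENNReal.ofReal s < MB g t} ⊆ ⋃ N, E N := by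
    intro t ht
    simp only [mem_setOf_eq, MB, lt_iSup_iff] at ht
    obtain ⟨σ, hσ, hlt⟩ := ht
    obtain ⟨N, hN⟩ := exists_nat_ge σ
    have h2σ : (0:ℝ) < 2*σ := by linarith
    have hkey : ENNReal.ofReal (2*σ*s) ≤ ∫⁻ η in Ioo (t - σ) (t + σ), g η := by
      have h1 : ENNReal.ofReal (2*σ) * ENNReal.ofReal s
          ≤ ENNReal.ofReal (2*σ) * ((ENNReal.ofReal (2*σ))⁻¹ * ∫⁻ η in Ioo (t - σ) (t + σ), g η) :=
        mul_le_mul' (le_refl _) hlt.le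
      rw [← mul_assoc, ENNReal.mul_inv_cancel (by positivity) ENNReal.ofReal_ne_top, one_mul] at h1
      rw [ENNReal.ofReal_mul (by positivity)]
      exact h1
    exact mem_iUnion.mpr ⟨N, σ, hσ, hN, hkey⟩
  have hEN : ∀ N, wm a (E N) * ENNReal.ofReal (s ^ q)
      ≤ ENNReal.ofReal C * ∫⁻ t, g t ^ q ∂(wm a) := by
    intro N
    have hch : ∀ t : E N, ∃ σ : ℝ, 0 < σ ∧ σ ≤ (N:ℝ) ∧
        ENNReal.ofReal (2*σ*s) ≤ ∫⁻ η in Ioo ((t:ℝ) - σ) ((t:ℝ) + σ), g η := fun t => t.2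
    choose r hr1 hr2 hr3 using hch
    obtain ⟨u, -, hdisj, hcov⟩ := Vitali.exists_disjoint_subfamily_covering_enlargement_closedBall
      (univ : Set (E N)) (fun t => (t:ℝ)) r (N:ℝ) (fun t _ => hr2 t) 5 (by norm_num)
    have hucnt : u.Countable := by
      apply hdisj.countable_of_nonempty_interior
      intro b _
      have h1 : Metric.ball (b:ℝ) (r b) ⊆ interior (Metric.closedBall (b:ℝ) (r b)) :=
        interior_maximal Metric.ball_subset_closedBall Metric.isOpen_ball
      exact Nonempty.mono h1 (Metric.nonempty_ball.mpr (hr1 b))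
    have hcover : E N ⊆ ⋃ b ∈ u, Metric.closedBall (b:ℝ) (5 * r b) := by
      intro t ht
      obtain ⟨b, hbu, hbsub⟩ := hcov ⟨t, ht⟩ (mem_univ _)
      exact mem_biUnion hbu (hbsub (Metric.mem_closedBall_self (hr1 _).le))
    set νq := (wm a).withDensity (fun t => g t ^ q) with hνq
    have hball' : ∀ b : E N, wm a (Metric.closedBall (b:ℝ) (5 * r b)) * ENNReal.ofReal (s^q)
        ≤ ENNReal.ofReal C * νq (Metric.closedBall (b:ℝ) (r b)) := by
      intro b
      have h1 := hball g hg (b:ℝ) (r b) s (hr1 b) hs (hr3 b)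
      rwa [hνq, withDensity_apply _ measurableSet_closedBall]
    have hdisj' : Pairwise (Function.onFun Disjoint fun b : u => Metric.closedBall ((b:E N):ℝ) (r b)) := by
      intro b c hbc
      exact hdisj b.2 c.2 (fun h => hbc (Subtype.ext h))
    calc wm a (E N) * ENNReal.ofReal (s^q)
        ≤ wm a (⋃ b ∈ u, Metric.closedBall (b:ℝ) (5 * r b)) * ENNReal.ofReal (s^q) :=
          mul_le_mul' (measure_mono hcover) (le_refl _)
      _ ≤ (∑' b : u, wm a (Metric.closedBall ((b:E N):ℝ) (5 * r (b:E N)))) * ENNReal.ofReal (s^q) :=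
          mul_le_mul' (measure_biUnion_le _ hucnt _) (le_refl _)
      _ = ∑' b : u, wm a (Metric.closedBall ((b:E N):ℝ) (5 * r (b:E N))) * ENNReal.ofReal (s^q) :=
          (ENNReal.tsum_mul_right).symm
      _ ≤ ∑' b : u, ENNReal.ofReal C * νq (Metric.closedBall ((b:E N):ℝ) (r (b:E N))) :=
          ENNReal.tsum_le_tsum (fun b => hball' b)
      _ = ENNReal.ofReal C * ∑' b : u, νq (Metric.closedBall ((b:E N):ℝ) (r (b:E N))) :=
          ENNReal.tsum_mul_left
      _ ≤ ENNReal.ofReal C * νq univ := by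
          apply mul_le_mul' (le_refl _)
          refine le_trans (tsum_meas_le_meas_iUnion_of_disjoint νq
            (fun b => measurableSet_closedBall) hdisj') ?_
          exact measure_mono (subset_univ _)
      _ = ENNReal.ofReal C * ∫⁻ t, g t ^ q ∂(wm a) := by
          rw [hνq, withDensity_apply _ MeasurableSet.univ, Measure.restrict_univ]
  calc wm a {t | ENNReal.ofReal s < MB g t} * ENNReal.ofReal (s ^ q)
      ≤ wm a (⋃ N, E N) * ENNReal.ofReal (s ^ q) :=
        mul_le_mul' (measure_mono hsub) (le_refl _)
    _ = (⨆ N, wm a (E N)) * ENNReal.ofReal (s ^ q) := by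
        rw [Directed.measure_iUnion (hmono.directed_le)]
    _ = ⨆ N, wm a (E N) * ENNReal.ofReal (s ^ q) := ENNReal.iSup_mul _ _
    _ ≤ ENNReal.ofReal C * ∫⁻ t, g t ^ q ∂(wm a) := iSup_le hEN

/-- layer cake inequality. -/
lemma layercake_le (μ : Measure ℝ) [SFinite μ] (h : ℝ → ℝ≥0∞) (hh : Measurable h)
    (p : ℝ) (hp : 1 < p) :
    ∫⁻ t, h t ^ p ∂μ
      ≤ ∫⁻ s in Ioi (0:ℝ), ENNReal.ofReal (p * s ^ (p-1)) * μ {t | ENNReal.ofReal s < h t} := by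
  have hp0 : (0:ℝ) < p := by linarith
  set F : ℝ → ℝ → ℝ≥0∞ := fun t s =>
    ENNReal.ofReal (p * s ^ (p-1)) * (if ENNReal.ofReal s < h t then 1 else 0) with hF
  have claim1 : ∀ t, h t ^ p ≤ ∫⁻ s in Ioi (0:ℝ), F t s := by
    intro t
    rcases eq_or_ne (h t) 0 with h0 | h0
    · rw [h0, ENNReal.zero_rpow_of_pos hp0]; exact zero_le
    rcases eq_or_ne (h t) ⊤ with htop | htop
    · have hinf : (⊤:ℝ≥0∞) ≤ ∫⁻ s in Ioi (0:ℝ), F t s := by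
        calc (⊤:ℝ≥0∞) = ENNReal.ofReal p * volume (Ioi (1:ℝ)) := by
              rw [Real.volume_Ioi, ENNReal.mul_top (by simp [hp0] : ENNReal.ofReal p ≠ 0)]
          _ = ∫⁻ _ in Ioi (1:ℝ), ENNReal.ofReal p := (setLIntegral_const _ _).symm
          _ ≤ ∫⁻ s in Ioi (1:ℝ), F t s := by
              apply setLIntegral_mono' measurableSet_Ioi
              intro s hs
              rw [hF]
              simp only
              rw [if_pos (htop ▸ ENNReal.ofReal_lt_top : ENNReal.ofReal s < h t), mul_one]
              apply ENNReal.ofReal_le_ofReal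
              nlinarith [Real.one_le_rpow (le_of_lt hs) (by linarith : (0:ℝ) ≤ p - 1), hp0]
          _ ≤ ∫⁻ s in Ioi (0:ℝ), F t s := lintegral_mono_set (Ioi_subset_Ioi zero_le_one)
      exact le_trans le_top hinf
    · set T : ℝ := (h t).toReal with hT'
      have hT : 0 < T := ENNReal.toReal_pos h0 htop
      have hTeq : ENNReal.ofReal T = h t := ENNReal.ofReal_toReal htop
      have hval := lint_rpow_Ioo p (p-1) T hp0.le (by linarith) hT.le
      have hval' : (∫⁻ s in Ioo (0:ℝ) T, ENNReal.ofReal (p * s^(p-1)))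
          = ENNReal.ofReal (T ^ p) := by
        rw [hval, show p - 1 + 1 = p by ring]
        congr 1
        field_simp
      calc h t ^ p = ENNReal.ofReal (T ^ p) := by
            rw [← hTeq]; exact ENNReal.ofReal_rpow_of_pos hT
        _ = ∫⁻ s in Ioo (0:ℝ) T, ENNReal.ofReal (p * s^(p-1)) := hval'.symm
        _ ≤ ∫⁻ s in Ioo (0:ℝ) T, F t s := by
            apply setLIntegral_mono' measurableSet_Ioo
            intro s hs
            rw [hF]
            simp only
            rw [if_pos (show ENNReal.ofReal s < h t from by
              rw [← hTeq]; exact (ENNReal.ofReal_lt_ofReal_iff hT).mpr hs.2), mul_one]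
        _ ≤ ∫⁻ s in Ioi (0:ℝ), F t s := lintegral_mono_set Ioo_subset_Ioi_self
  have hFmeas : Measurable (Function.uncurry F) := by
    apply Measurable.mul
    · exact ((measurable_snd.pow measurable_const).const_mul p).ennreal_ofReal
    · have hset : MeasurableSet {v : ℝ × ℝ | ENNReal.ofReal v.2 < h v.1} :=
        measurableSet_lt (ENNReal.measurable_ofReal.comp measurable_snd) (hh.comp measurable_fst)
      exact Measurable.ite hset measurable_const measurable_const
  calc ∫⁻ t, h t ^ p ∂μ ≤ ∫⁻ t, (∫⁻ s in Ioi (0:ℝ), F t s) ∂μ := lintegral_mono claim1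
    _ = ∫⁻ s in Ioi (0:ℝ), ∫⁻ t, F t s ∂μ :=
        lintegral_lintegral_swap hFmeas.aemeasurable
    _ = ∫⁻ s in Ioi (0:ℝ), ENNReal.ofReal (p * s^(p-1)) * μ {t | ENNReal.ofReal s < h t} := by
        apply lintegral_congr
        intro s
        rw [hF]
        simp only
        rw [lintegral_const_mul' _ _ ENNReal.ofReal_ne_top]
        congr 1
        have hset : MeasurableSet {t : ℝ | ENNReal.ofReal s < h t} :=
          hh measurableSet_Ioi
        rw [← lintegral_indicator_one hset]
        apply lintegral_congr
        intro t
        simp [Set.indicator_apply]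

/-- weighted strong type `(p,p)`. -/
lemma strong_type (p a q : ℝ) (ha1 : -1 < a) (hq : 1 < q) (haq : a < q - 1) (hqp : q < p) :
    ∃ K : ℝ, 0 < K ∧ ∀ g : ℝ → ℝ≥0∞, Measurable g →
      ∫⁻ t, MB g t ^ p ∂(wm a) ≤ ENNReal.ofReal K * ∫⁻ t, g t ^ p ∂(wm a) := by
  obtain ⟨Cw, hCw, hweak⟩ := weak_type a q ha1 hq haq
  have hp1 : 1 < p := lt_trans hq hqp
  have hp0 : (0:ℝ) < p := by linarith
  have hq0 : (0:ℝ) < q := by linarith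
  have hpq : (0:ℝ) < p - q := by linarith
  have h2q : (0:ℝ) < (2:ℝ) ^ q := Real.rpow_pos_of_pos (by norm_num) q
  have h2pq : (0:ℝ) < (2:ℝ) ^ (p - q) := Real.rpow_pos_of_pos (by norm_num) (p - q)
  set c2 : ℝ := p * 2 ^ q with hc2
  have hc2pos : 0 < c2 := by positivity
  set K2 : ℝ := c2 * 2 ^ (p - q) / (p - q) with hK2
  have hK2pos : 0 < K2 := by positivity
  refine ⟨Cw * K2, by positivity, ?_⟩
  intro g hg
  set μ := wm a with hμ
  set G : ℝ → ℝ → ℝ≥0∞ := fun s t => if ENNReal.ofReal (s/2) < g t then g t else 0 with hG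
  have hGmeas : ∀ s, Measurable (G s) := fun s =>
    Measurable.ite (hg measurableSet_Ioi) hg measurable_const
  have hpt : ∀ s : ℝ, 0 < s → ∀ t, MB g t ≤ MB (G s) t + ENNReal.ofReal (s/2) := by
    intro s hs t
    have h1 : ∀ η, g η ≤ G s η + ENNReal.ofReal (s/2) := by
      intro η
      by_cases hc : ENNReal.ofReal (s/2) < g η
      · rw [hG]; simp only [if_pos hc]; exact le_self_add
      · rw [hG]; simp only [if_neg hc]; rw [zero_add]; exact not_lt.mp hc
    calc MB g t ≤ MB (fun η => G s η + ENNReal.ofReal (s/2)) t := MB_mono h1 t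
      _ ≤ MB (G s) t + MB (fun _ => ENNReal.ofReal (s/2)) t := MB_add_le _ _ (hGmeas s) t
      _ ≤ MB (G s) t + ENNReal.ofReal (s/2) :=
          add_le_add (le_refl _) (MB_le_const _ _ (fun _ => le_refl _) t)
  have hlev : ∀ s : ℝ, 0 < s →
      {t | ENNReal.ofReal s < MB g t} ⊆ {t | ENNReal.ofReal (s/2) < MB (G s) t} := by
    intro s hs t ht
    simp only [mem_setOf_eq] at ht ⊢
    have h2 : ENNReal.ofReal (s/2) + ENNReal.ofReal (s/2) < MB (G s) t + ENNReal.ofReal (s/2) := by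
      calc ENNReal.ofReal (s/2) + ENNReal.ofReal (s/2) = ENNReal.ofReal s := by
            rw [← ENNReal.ofReal_add (by linarith) (by linarith)]; ring_nf
        _ < MB g t := ht
        _ ≤ MB (G s) t + ENNReal.ofReal (s/2) := hpt s hs t
    exact (ENNReal.add_lt_add_iff_right ENNReal.ofReal_ne_top).mp h2
  have hmeas_bound : ∀ s : ℝ, 0 < s → μ {t | ENNReal.ofReal s < MB g t}
      ≤ ENNReal.ofReal Cw * (∫⁻ t, G s t ^ q ∂μ) * (ENNReal.ofReal ((s/2) ^ q))⁻¹ := by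
    intro s hs
    have hw := hweak (G s) (hGmeas s) (s/2) (by linarith)
    have h1 : μ {t | ENNReal.ofReal s < MB g t} * ENNReal.ofReal ((s/2)^q)
        ≤ ENNReal.ofReal Cw * ∫⁻ t, G s t ^ q ∂μ :=
      le_trans (mul_le_mul' (measure_mono (hlev s hs)) (le_refl _)) hw
    have hcne : ENNReal.ofReal ((s/2)^q) ≠ 0 := by
      simp only [ne_eq, ENNReal.ofReal_eq_zero, not_le]
      positivity
    calc μ {t | ENNReal.ofReal s < MB g t}
        = μ {t | ENNReal.ofReal s < MB g t} * ENNReal.ofReal ((s/2)^q)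
            * (ENNReal.ofReal ((s/2)^q))⁻¹ := by
          rw [mul_assoc, ENNReal.mul_inv_cancel hcne ENNReal.ofReal_ne_top, mul_one]
      _ ≤ ENNReal.ofReal Cw * (∫⁻ t, G s t ^ q ∂μ) * (ENNReal.ofReal ((s/2)^q))⁻¹ :=
          mul_le_mul' h1 (le_refl _)
  set H : ℝ → ℝ → ℝ≥0∞ := fun s t =>
    ENNReal.ofReal (c2 * s ^ (p-1-q)) * (if ENNReal.ofReal (s/2) < g t then g t ^ q else 0) with hH
  have hHmeas : Measurable (Function.uncurry H) := by
    apply Measurable.mul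
    · exact ((measurable_fst.pow measurable_const).const_mul c2).ennreal_ofReal
    · have hset : MeasurableSet {v : ℝ × ℝ | ENNReal.ofReal (v.1/2) < g v.2} :=
        measurableSet_lt ((measurable_fst.div_const 2).ennreal_ofReal) (hg.comp measurable_snd)
      exact Measurable.ite hset ((hg.comp measurable_snd).pow measurable_const) measurable_const
  have step2 : ∀ s : ℝ, 0 < s → ENNReal.ofReal (p * s^(p-1)) * μ {t | ENNReal.ofReal s < MB g t}
      ≤ ENNReal.ofReal Cw * ∫⁻ t, H s t ∂μ := by
    intro s hs
    have hsq : (0:ℝ) < s ^ q := Real.rpow_pos_of_pos hs q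
    have hD : ENNReal.ofReal (p * s^(p-1)) * (ENNReal.ofReal ((s/2)^q))⁻¹
        = ENNReal.ofReal (c2 * s^(p-1-q)) := by
      rw [← ENNReal.ofReal_inv_of_pos (by positivity), ← ENNReal.ofReal_mul (by positivity)]
      congr 1
      have hsub : s ^ (p-1-q) = s ^ (p-1) / s ^ q := Real.rpow_sub hs (p-1) q
      rw [hsub, Real.div_rpow hs.le (by norm_num : (0:ℝ) ≤ 2), hc2, inv_div]
      generalize s ^ (p-1) = X
      generalize s ^ q = Y
      generalize (2:ℝ) ^ q = Z
      ring
    have hA : (∫⁻ t, H s t ∂μ) = ENNReal.ofReal (c2 * s^(p-1-q)) * ∫⁻ t, G s t ^ q ∂μ := by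
      rw [hH]
      simp only
      rw [lintegral_const_mul' _ _ ENNReal.ofReal_ne_top]
      congr 1
      apply lintegral_congr
      intro t
      rw [hG]
      by_cases hc : ENNReal.ofReal (s/2) < g t
      · simp only [if_pos hc]
      · simp only [if_neg hc]
        rw [ENNReal.zero_rpow_of_pos hq0]
    calc ENNReal.ofReal (p * s^(p-1)) * μ {t | ENNReal.ofReal s < MB g t}
        ≤ ENNReal.ofReal (p * s^(p-1)) *
            (ENNReal.ofReal Cw * (∫⁻ t, G s t ^ q ∂μ) * (ENNReal.ofReal ((s/2)^q))⁻¹) :=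
          mul_le_mul' (le_refl _) (hmeas_bound s hs)
      _ = ENNReal.ofReal Cw * ((ENNReal.ofReal (p * s^(p-1)) * (ENNReal.ofReal ((s/2)^q))⁻¹)
            * ∫⁻ t, G s t ^ q ∂μ) := by ring
      _ = ENNReal.ofReal Cw * ∫⁻ t, H s t ∂μ := by rw [hD, ← hA]
  have step4 : ∀ t, (∫⁻ s in Ioi (0:ℝ), H s t) ≤ ENNReal.ofReal K2 * g t ^ p := by
    intro t
    rcases eq_or_ne (g t) 0 with h0 | h0
    · have : ∀ s : ℝ, H s t = 0 := by
        intro s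
        rw [hH]
        simp only
        rw [if_neg (by rw [h0]; exact not_lt.mpr (zero_le)), mul_zero]
      simp only [this, lintegral_zero]
      exact zero_le
    rcases eq_or_ne (g t) ⊤ with htop | htop
    · rw [htop, ENNReal.top_rpow_of_pos hp0, ENNReal.mul_top (by simp [hK2pos] : ENNReal.ofReal K2 ≠ 0)]
      exact le_top
    · set T : ℝ := (g t).toReal with hT'
      have hT : 0 < T := ENNReal.toReal_pos h0 htop
      have hTeq : ENNReal.ofReal T = g t := ENNReal.ofReal_toReal htop
      have hgq_ne : g t ^ q ≠ ⊤ := ENNReal.rpow_ne_top_of_nonneg hq0.le htop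
      have hbound : (∫⁻ s in Ioi (0:ℝ), H s t)
          ≤ ∫⁻ s, (Ioo (0:ℝ) (2*T)).indicator
              (fun s => ENNReal.ofReal (c2 * s ^ (p-1-q)) * g t ^ q) s := by
        calc (∫⁻ s in Ioi (0:ℝ), H s t)
            ≤ ∫⁻ s in Ioi (0:ℝ), (Ioo (0:ℝ) (2*T)).indicator
                (fun s => ENNReal.ofReal (c2 * s ^ (p-1-q)) * g t ^ q) s := by
              apply lintegral_mono_ae
              filter_upwards [ae_restrict_mem measurableSet_Ioi] with s hs
              rw [hH]
              simp only
              by_cases hc : ENNReal.ofReal (s/2) < g t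
              · have hsT : s < 2*T := by
                  rw [← hTeq] at hc
                  have := (ENNReal.ofReal_lt_ofReal_iff hT).mp hc
                  linarith
                rw [if_pos hc,
                  Set.indicator_of_mem (show s ∈ Ioo (0:ℝ) (2*T) from ⟨hs, hsT⟩) _]
              · rw [if_neg hc, mul_zero]
                exact zero_le
          _ ≤ _ := setLIntegral_le_lintegral _ _
      calc (∫⁻ s in Ioi (0:ℝ), H s t)
          ≤ ∫⁻ s, (Ioo (0:ℝ) (2*T)).indicator
              (fun s => ENNReal.ofReal (c2 * s ^ (p-1-q)) * g t ^ q) s := hbound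
        _ = ∫⁻ s in Ioo (0:ℝ) (2*T), ENNReal.ofReal (c2 * s ^ (p-1-q)) * g t ^ q :=
            lintegral_indicator measurableSet_Ioo _
        _ = (∫⁻ s in Ioo (0:ℝ) (2*T), ENNReal.ofReal (c2 * s ^ (p-1-q))) * g t ^ q :=
            lintegral_mul_const' _ _ hgq_ne
        _ = ENNReal.ofReal (c2 * (2*T) ^ (p-q) / (p-q)) * g t ^ q := by
            rw [lint_rpow_Ioo c2 (p-1-q) (2*T) hc2pos.le (by linarith) (by linarith),
              show p-1-q+1 = p-q by ring]
        _ = ENNReal.ofReal K2 * g t ^ p := by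
            rw [Real.mul_rpow (by norm_num : (0:ℝ) ≤ 2) hT.le]
            rw [show c2 * (2 ^ (p-q) * T ^ (p-q)) / (p-q)
              = K2 * T ^ (p-q) by rw [hK2]; ring]
            rw [ENNReal.ofReal_mul hK2pos.le, mul_assoc]
            congr 1
            rw [← ENNReal.ofReal_rpow_of_pos hT, hTeq, ← ENNReal.rpow_add _ _ h0 htop,
              show p - q + q = p by ring]
  calc ∫⁻ t, MB g t ^ p ∂μ
      ≤ ∫⁻ s in Ioi (0:ℝ), ENNReal.ofReal (p * s^(p-1)) * μ {t | ENNReal.ofReal s < MB g t} :=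
        layercake_le μ (MB g) (measurable_MB g hg) p hp1
    _ ≤ ∫⁻ s in Ioi (0:ℝ), ENNReal.ofReal Cw * ∫⁻ t, H s t ∂μ := by
        apply lintegral_mono_ae
        filter_upwards [ae_restrict_mem measurableSet_Ioi] with s hs
        exact step2 s hs
    _ = ENNReal.ofReal Cw * ∫⁻ s in Ioi (0:ℝ), ∫⁻ t, H s t ∂μ :=
        lintegral_const_mul' _ _ ENNReal.ofReal_ne_top
    _ = ENNReal.ofReal Cw * ∫⁻ t, (∫⁻ s in Ioi (0:ℝ), H s t) ∂μ := by
        congr 1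
        exact lintegral_lintegral_swap hHmeas.aemeasurable
    _ ≤ ENNReal.ofReal Cw * ∫⁻ t, ENNReal.ofReal K2 * g t ^ p ∂μ :=
        mul_le_mul' (le_refl _) (lintegral_mono step4)
    _ = ENNReal.ofReal (Cw * K2) * ∫⁻ t, g t ^ p ∂μ := by
        rw [lintegral_const_mul' _ _ ENNReal.ofReal_ne_top, ← mul_assoc,
          ← ENNReal.ofReal_mul hCw.le]

end MuckAux

/-- **Muckenhoupt weighted maximal inequality for power weights** (Lemma 2.6).
If `1 < p < ∞` and `-1 < a < p - 1`, then
`‖𝓜 f‖_{L^p(ℝ,|t|^a dt)} ≤ C ‖f‖_{L^p(ℝ,|t|^a dt)}` for all `f ∈ L^p(ℝ,|t|^a dt)`. -/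
theorem muckenhoupt_power_weight_maximal (p a : ℝ) (hp : 1 < p)
    (ha1 : -1 < a) (ha2 : a < p - 1) :
    ∃ C : ℝ≥0, ∀ f : ℝ → ℝ, Measurable f →
      (∫⁻ t : ℝ, (‖f t‖₊ : ℝ≥0∞) ^ p * ENNReal.ofReal (|t| ^ a)) ≠ ∞ →
      (∫⁻ t : ℝ, maxHL f t ^ p * ENNReal.ofReal (|t| ^ a)) ^ (1 / p)
        ≤ C * (∫⁻ t : ℝ, (‖f t‖₊ : ℝ≥0∞) ^ p * ENNReal.ofReal (|t| ^ a)) ^ (1 / p) := by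
  classical
  set q : ℝ := (max 1 (a+1) + p) / 2 with hqdef
  have hm1 : 1 ≤ max 1 (a+1) := le_max_left _ _
  have hma : a + 1 ≤ max 1 (a+1) := le_max_right _ _
  have hmp : max 1 (a+1) < p := max_lt hp (by linarith)
  have hq1 : 1 < q := by rw [hqdef]; linarith
  have hqp : q < p := by rw [hqdef]; linarith
  have haq : a < q - 1 := by rw [hqdef]; linarith
  obtain ⟨K, hK, hstrong⟩ := MuckAux.strong_type p a q ha1 hq1 haq hqp
  refine ⟨(K ^ (1/p)).toNNReal, ?_⟩
  intro f hf _
  set g : ℝ → ℝ≥0∞ := fun t => ((‖f t‖₊ : ℝ≥0∞)) with hg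
  have hgm : Measurable g := hf.nnnorm.coe_nnreal_ennreal
  have hconv1 : (∫⁻ t : ℝ, maxHL f t ^ p * ENNReal.ofReal (|t| ^ a))
      = ∫⁻ t, MuckAux.MB g t ^ p ∂(MuckAux.wm a) := by
    rw [MuckAux.wm, lintegral_withDensity_eq_lintegral_mul _ (MuckAux.measurable_w a)
      ((MuckAux.measurable_MB g hgm).pow measurable_const)]
    apply lintegral_congr; intro t
    simp only [Pi.mul_apply]
    rw [show maxHL f t = MuckAux.MB g t from rfl]
    ring
  have hconv2 : (∫⁻ t : ℝ, (‖f t‖₊ : ℝ≥0∞) ^ p * ENNReal.ofReal (|t| ^ a))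
      = ∫⁻ t, g t ^ p ∂(MuckAux.wm a) := by
    rw [MuckAux.wm, lintegral_withDensity_eq_lintegral_mul _ (MuckAux.measurable_w a)
      (hgm.pow measurable_const)]
    apply lintegral_congr; intro t
    simp only [Pi.mul_apply]
    rw [hg]
    ring
  rw [hconv1, hconv2]
  have hmain := hstrong g hgm
  have h1 : (∫⁻ t, MuckAux.MB g t ^ p ∂(MuckAux.wm a)) ^ (1/p)
      ≤ (ENNReal.ofReal K * ∫⁻ t, g t ^ p ∂(MuckAux.wm a)) ^ (1/p) :=
    ENNReal.rpow_le_rpow hmain (by positivity)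
  rw [ENNReal.mul_rpow_of_nonneg _ _ (by positivity : (0:ℝ) ≤ 1/p)] at h1
  refine h1.trans (le_of_eq ?_)
  congr 1
  rw [ENNReal.ofReal_rpow_of_pos hK]
  rfl
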